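/- For any oriented graph G, the oriented relative clique number is at most the fractional oriented chromatic number, which is at most the oriented chromatic number: ω_ro(G) ≤ χ_o^*(G) ≤ χ_o(G). -/
import Mathlib



/-- An oriented graph: a directed graph with no loops and no directed 2-cycles. -/
structure OGraph (V : Type*) where
  adj : V → V → Prop
  irrefl : ∀ v, ¬ adj v v
  asymm : ∀ u v, adj u v → ¬ adj v u

/-- A homomorphism of oriented graphs. -/
def OGraph.Hom {V W : Type*} (G : OGraph V) (H : OGraph W) (f : V → W) : Prop :=
  ∀ u v, G.adj u v → H.adj (f u) (f v)

/-- `f` is a `b`-fold oriented `k`-coloring of `G`. -/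
def IsFoldColoring {V : Type*} (G : OGraph V) (b k : ℕ) (f : V → Finset (Fin k)) : Prop :=
  (∀ v, (f v).card = b) ∧
  (∀ u v, G.adj u v → Disjoint (f u) (f v)) ∧
  (∀ x y z w, G.adj x y → G.adj z w → ¬ Disjoint (f x) (f w) → Disjoint (f y) (f z))

/-- The `b`-fold oriented chromatic number. -/
noncomputable def foldChrom {V : Type*} (G : OGraph V) (b : ℕ) : ℕ :=
  sInf {k | ∃ f : V → Finset (Fin k), IsFoldColoring G b k f}

/-- The fractional oriented chromatic number: the infimum of `k/b` over all
`b`-fold oriented `k`-colorings. -/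
noncomputable def fracChrom {V : Type*} (G : OGraph V) : ℝ :=
  sInf {x : ℝ | ∃ (b k : ℕ) (f : V → Finset (Fin k)),
    0 < b ∧ IsFoldColoring G b k f ∧ x = (k : ℝ) / b}


/-- The oriented relative clique number: the maximum size of a set of vertices any two
distinct members of which are adjacent or connected by a directed 2-path. -/
noncomputable def relCliqueNum {V : Type*} [Fintype V] (G : OGraph V) : ℕ :=
  sSup {n | ∃ R : Finset V, R.card = n ∧ ∀ x ∈ R, ∀ y ∈ R, x ≠ y →
    G.adj x y ∨ G.adj y x ∨ ∃ z, (G.adj x z ∧ G.adj z y) ∨ (G.adj y z ∧ G.adj z x)}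

/-- The trivial injective 1-fold coloring with `Fintype.card V` colors. -/
lemma exists_triv_coloring {V : Type*} [Fintype V] (G : OGraph V) :
    ∃ f : V → Finset (Fin (Fintype.card V)), IsFoldColoring G 1 (Fintype.card V) f := by
  classical
  let e := Fintype.equivFin V
  refine ⟨fun v => {e v}, fun v => rfl, ?_, ?_⟩
  · intro u v huv
    simp only [Finset.disjoint_singleton, ne_eq, EmbeddingLike.apply_eq_iff_eq]
    rintro rfl; exact G.irrefl u huv
  · intro x y z w hxy hzw hnd
    have hxw : x = w := by
      by_contra h
      apply hnd
      simp only [Finset.disjoint_singleton, ne_eq, EmbeddingLike.apply_eq_iff_eq]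
      tauto
    subst hxw
    simp only [Finset.disjoint_singleton, ne_eq, EmbeddingLike.apply_eq_iff_eq]
    rintro rfl
    exact G.asymm _ _ hxy hzw

lemma key_card {V : Type*} (G : OGraph V) {b k : ℕ} (hb : 0 < b)
    {f : V → Finset (Fin k)} (hf : IsFoldColoring G b k f) {R : Finset V}
    (hR : ∀ x ∈ R, ∀ y ∈ R, x ≠ y →
      G.adj x y ∨ G.adj y x ∨ ∃ z, (G.adj x z ∧ G.adj z y) ∨ (G.adj y z ∧ G.adj z x)) :
    R.card * b ≤ k := by
  classical
  obtain ⟨h1, h2, h3⟩ := hf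
  have hdisj : ∀ x ∈ R, ∀ y ∈ R, x ≠ y → Disjoint (f x) (f y) := by
    intro x hx y hy hxy
    have hz0 : ∀ z : V, ¬ Disjoint (f z) (f z) := by
      intro z hz
      have he : f z = ⊥ := disjoint_self.mp hz
      have hb' := h1 z
      rw [he] at hb'
      simp only [Finset.bot_eq_empty, Finset.card_empty] at hb'
      omega
    rcases hR x hx y hy hxy with h | h | ⟨z, ⟨h4, h5⟩ | ⟨h4, h5⟩⟩
    · exact h2 x y h
    · exact (h2 y x h).symm
    · by_contra hc
      exact hz0 z (h3 x z z y h4 h5 hc)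
    · by_contra hc
      exact hz0 z (h3 y z z x h4 h5 (fun hd => hc hd.symm))
  have hcard : (R.biUnion f).card = ∑ x ∈ R, (f x).card := Finset.card_biUnion hdisj
  have : ∑ x ∈ R, (f x).card = R.card * b := by
    rw [Finset.sum_congr rfl (fun x _ => h1 x), Finset.sum_const, smul_eq_mul]
  calc R.card * b = (R.biUnion f).card := by rw [hcard, this]
    _ ≤ Fintype.card (Fin k) := Finset.card_le_univ _
    _ = k := Fintype.card_fin k

theorem stmt5 {V : Type*} [Fintype V] (G : OGraph V) :
    (relCliqueNum G : ℝ) ≤ fracChrom G ∧ fracChrom G ≤ (foldChrom G 1 : ℝ) := by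
  classical
  obtain ⟨f0, hf0⟩ := exists_triv_coloring G
  have hSne : {x : ℝ | ∃ (b k : ℕ) (f : V → Finset (Fin k)),
      0 < b ∧ IsFoldColoring G b k f ∧ x = (k : ℝ) / b}.Nonempty :=
    ⟨(Fintype.card V : ℝ) / 1, 1, Fintype.card V, f0, one_pos, hf0, by norm_num⟩
  have hbdd : BddBelow {x : ℝ | ∃ (b k : ℕ) (f : V → Finset (Fin k)),
      0 < b ∧ IsFoldColoring G b k f ∧ x = (k : ℝ) / b} := by
    refine ⟨0, ?_⟩
    rintro x ⟨b, k, f, hb, hf, rfl⟩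
    positivity
  -- relCliqueNum achieved
  have hRset : {n | ∃ R : Finset V, R.card = n ∧ ∀ x ∈ R, ∀ y ∈ R, x ≠ y →
      G.adj x y ∨ G.adj y x ∨ ∃ z, (G.adj x z ∧ G.adj z y) ∨ (G.adj y z ∧ G.adj z x)}.Nonempty :=
    ⟨0, ∅, rfl, by simp⟩
  have hRbdd : BddAbove {n | ∃ R : Finset V, R.card = n ∧ ∀ x ∈ R, ∀ y ∈ R, x ≠ y →
      G.adj x y ∨ G.adj y x ∨ ∃ z, (G.adj x z ∧ G.adj z y) ∨ (G.adj y z ∧ G.adj z x)} := by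
    refine ⟨Fintype.card V, ?_⟩
    rintro n ⟨R, rfl, -⟩
    exact Finset.card_le_univ R
  obtain ⟨R, hRcard, hRprop⟩ := Nat.sSup_mem hRset hRbdd
  constructor
  · apply le_csInf hSne
    rintro x ⟨b, k, f, hb, hf, rfl⟩
    have hk := key_card G hb hf hRprop
    have hk' : relCliqueNum G * b ≤ k := by rw [hRcard] at hk; exact hk
    rw [le_div_iff₀ (by exact_mod_cast hb : (0:ℝ) < b)]
    exact_mod_cast hk'
  · have hmem : foldChrom G 1 ∈ {k | ∃ f : V → Finset (Fin k), IsFoldColoring G 1 k f} :=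
      Nat.sInf_mem ⟨Fintype.card V, f0, hf0⟩
    obtain ⟨f1, hf1⟩ := hmem
    have : ((foldChrom G 1 : ℕ) : ℝ) / 1 ∈ {x : ℝ | ∃ (b k : ℕ) (f : V → Finset (Fin k)),
        0 < b ∧ IsFoldColoring G b k f ∧ x = (k : ℝ) / b} :=
      ⟨1, foldChrom G 1, f1, one_pos, hf1, by norm_num⟩
    have h := csInf_le hbdd this
    rw [div_one] at h
    exact h
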